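/- arXiv:cond-mat/0503087 — 5 statements merged into one kernel-verified Lean document; each statement's English description precedes it below -/
import Mathlib

section
/- For any natural numbers s, m and reals p, Δ with 0 ≤ p, p + Δ ≤ 1, and Δ ≥ 0, the difference in binomial point probabilities satisfies |P(Bin(s,p) = m) − P(Bin(s,p+Δ) = m)| ≤ s·Δ. -/
theorem term_le_one (n j : ℕ) (x : ℝ) (hx : 0 ≤ x) (hx1 : x ≤ 1) :
    (n.choose j : ℝ) * x ^ j * (1 - x) ^ (n - j) ≤ 1 := by
  by_cases hj : j ≤ n
  · have hsum : ∑ i ∈ Finset.range (n + 1), x ^ i * (1 - x) ^ (n - i) * (n.choose i : ℝ) = 1 := by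
      rw [← add_pow]; simp
    have h1x : (0:ℝ) ≤ 1 - x := by linarith
    have := Finset.single_le_sum (f := fun i => x ^ i * (1 - x) ^ (n - i) * (n.choose i : ℝ))
      (fun i _ => by positivity) (Finset.mem_range.mpr (Nat.lt_succ_of_le hj))
    rw [hsum] at this
    linarith
  · simp [Nat.choose_eq_zero_of_lt (lt_of_not_ge hj)]

theorem pow_sub_pow_le_lin (a b : ℝ) (n : ℕ) (h0 : 0 ≤ a) (hab : a ≤ b) :
    b ^ n - a ^ n ≤ n * b ^ (n - 1) * (b - a) := by
  have hb : 0 ≤ b := le_trans h0 hab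
  rw [← geom_sum₂_mul b a n]
  have hbound : ∑ i ∈ Finset.range n, b ^ i * a ^ (n - 1 - i) ≤ n * b ^ (n - 1) := by
    calc ∑ i ∈ Finset.range n, b ^ i * a ^ (n - 1 - i)
        ≤ ∑ i ∈ Finset.range n, b ^ (n - 1) := by
          apply Finset.sum_le_sum
          intro i hi
          have hi' := Finset.mem_range.mp hi
          calc b ^ i * a ^ (n - 1 - i) ≤ b ^ i * b ^ (n - 1 - i) := by
                apply mul_le_mul_of_nonneg_left (pow_le_pow_left₀ h0 hab _) (by positivity)
            _ = b ^ (i + (n - 1 - i)) := (pow_add b i _).symm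
            _ = b ^ (n - 1) := by congr 1; omega
      _ = n * b ^ (n - 1) := by rw [Finset.sum_const, Finset.card_range]; ring
  exact mul_le_mul_of_nonneg_right hbound (by linarith)

theorem key1 (s m : ℕ) (x : ℝ) (hx : 0 ≤ x) (hx1 : x ≤ 1) :
    (s.choose m : ℝ) * m * x ^ (m - 1) * (1 - x) ^ (s - m) ≤ s := by
  rcases Nat.eq_zero_or_pos m with hm | hm
  · subst hm; simp
  by_cases hms : m ≤ s
  · have hs : 1 ≤ s := le_trans hm hms
    have hnat : s.choose m * m = s * (s - 1).choose (m - 1) := by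
      have := Nat.add_one_mul_choose_eq (s - 1) (m - 1)
      have h1 : s - 1 + 1 = s := by omega
      have h2 : m - 1 + 1 = m := by omega
      rw [h1, h2] at this
      omega
    have hcast : (s.choose m : ℝ) * m = (s : ℝ) * ((s - 1).choose (m - 1) : ℝ) := by
      exact_mod_cast congrArg (Nat.cast (R := ℝ)) hnat
    rw [hcast]
    have hsub : s - m = (s - 1) - (m - 1) := by omega
    rw [hsub]
    have := term_le_one (s - 1) (m - 1) x hx hx1
    calc (s : ℝ) * ((s - 1).choose (m - 1) : ℝ) * x ^ (m - 1) * (1 - x) ^ ((s-1) - (m-1))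
        = (s : ℝ) * (((s - 1).choose (m - 1) : ℝ) * x ^ (m - 1) * (1 - x) ^ ((s-1) - (m-1))) := by ring
      _ ≤ (s : ℝ) * 1 := by
          apply mul_le_mul_of_nonneg_left this (by positivity)
      _ = s := by ring
  · simp [Nat.choose_eq_zero_of_lt (lt_of_not_ge hms)]

theorem key2 (s m : ℕ) (x : ℝ) (hx : 0 ≤ x) (hx1 : x ≤ 1) :
    (s.choose m : ℝ) * (s - m : ℕ) * x ^ m * (1 - x) ^ (s - m - 1) ≤ s := by
  by_cases hms : m < s
  · have hnat : s.choose m * (s - m) = s * (s - 1).choose m := by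
      have := Nat.add_one_mul_choose_eq (s - 1) (s - m - 1)
      have h1 : s - 1 + 1 = s := by omega
      have h2 : s - m - 1 + 1 = s - m := by omega
      rw [h1, h2] at this
      have h3 : s.choose (s - m) = s.choose m := Nat.choose_symm (le_of_lt hms)
      have h4 : (s - 1).choose (s - m - 1) = (s - 1).choose m := by
        have := Nat.choose_symm (n := s - 1) (k := m) (by omega)
        have h5 : s - 1 - m = s - m - 1 := by omega
        rw [h5] at this
        exact this
      rw [h3, h4] at this
      omega
    have hcast : (s.choose m : ℝ) * ((s - m : ℕ) : ℝ) = (s : ℝ) * ((s - 1).choose m : ℝ) := by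
      exact_mod_cast congrArg (Nat.cast (R := ℝ)) hnat
    rw [hcast]
    have hsub : s - m - 1 = (s - 1) - m := by omega
    rw [hsub]
    have := term_le_one (s - 1) m x hx hx1
    calc (s : ℝ) * ((s - 1).choose m : ℝ) * x ^ m * (1 - x) ^ ((s-1) - m)
        = (s : ℝ) * (((s - 1).choose m : ℝ) * x ^ m * (1 - x) ^ ((s-1) - m)) := by ring
      _ ≤ (s : ℝ) * 1 := mul_le_mul_of_nonneg_left this (by positivity)
      _ = s := by ring
  · have : s - m = 0 := by omega
    rw [this]
    simp

theorem binomial_pmf_diff (s m : ℕ) (p Δ : ℝ) (hp : 0 ≤ p) (hpd : p + Δ ≤ 1)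
    (hΔ : 0 ≤ Δ) :
    |(s.choose m : ℝ) * p ^ m * (1 - p) ^ (s - m) -
      (s.choose m : ℝ) * (p + Δ) ^ m * (1 - (p + Δ)) ^ (s - m)| ≤ s * Δ := by
  set q : ℝ := p + Δ with hq
  have hq0 : 0 ≤ q := by rw [hq]; linarith
  have hq1 : q ≤ 1 := hpd
  have hp1 : p ≤ 1 := by linarith
  have h1p : (0:ℝ) ≤ 1 - p := by linarith
  have h1q : (0:ℝ) ≤ 1 - q := by linarith
  have hpq : p ≤ q := by rw [hq]; linarith
  have hC : (0:ℝ) ≤ (s.choose m : ℝ) := Nat.cast_nonneg _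
  have hpm : p ^ m ≤ q ^ m := pow_le_pow_left₀ hp hpq m
  have hqpk : (1 - q) ^ (s - m) ≤ (1 - p) ^ (s - m) := pow_le_pow_left₀ h1q (by linarith) _
  have hA : (s.choose m : ℝ) * (q ^ m - p ^ m) * (1 - q) ^ (s - m) ≤ s * Δ := by
    have h1 : q ^ m - p ^ m ≤ m * q ^ (m - 1) * Δ := by
      have h := pow_sub_pow_le_lin p q m hp hpq
      have h2 : q - p = Δ := by rw [hq]; ring
      rw [h2] at h; exact h
    calc (s.choose m : ℝ) * (q ^ m - p ^ m) * (1 - q) ^ (s - m)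
        ≤ (s.choose m : ℝ) * (m * q ^ (m - 1) * Δ) * (1 - q) ^ (s - m) := by
          exact mul_le_mul_of_nonneg_right (mul_le_mul_of_nonneg_left h1 hC) (pow_nonneg h1q _)
      _ = ((s.choose m : ℝ) * m * q ^ (m - 1) * (1 - q) ^ (s - m)) * Δ := by ring
      _ ≤ s * Δ := mul_le_mul_of_nonneg_right (key1 s m q hq0 hq1) hΔ
  have hB : (s.choose m : ℝ) * p ^ m * ((1 - p) ^ (s - m) - (1 - q) ^ (s - m)) ≤ s * Δ := by
    have h1 : (1 - p) ^ (s - m) - (1 - q) ^ (s - m)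
        ≤ ((s - m : ℕ) : ℝ) * (1 - p) ^ (s - m - 1) * Δ := by
      have h := pow_sub_pow_le_lin (1 - q) (1 - p) (s - m) h1q (by linarith)
      have h2 : (1 - p) - (1 - q) = Δ := by rw [hq]; ring
      rw [h2] at h; exact h
    calc (s.choose m : ℝ) * p ^ m * ((1 - p) ^ (s - m) - (1 - q) ^ (s - m))
        ≤ (s.choose m : ℝ) * p ^ m * (((s - m : ℕ) : ℝ) * (1 - p) ^ (s - m - 1) * Δ) := by
          apply mul_le_mul_of_nonneg_left h1
          positivity
      _ = ((s.choose m : ℝ) * ((s - m : ℕ) : ℝ) * p ^ m * (1 - p) ^ (s - m - 1)) * Δ := by ring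
      _ ≤ s * Δ := mul_le_mul_of_nonneg_right (key2 s m p hp hp1) hΔ
  have hAnn : 0 ≤ (s.choose m : ℝ) * (q ^ m - p ^ m) * (1 - q) ^ (s - m) :=
    mul_nonneg (mul_nonneg hC (by linarith)) (pow_nonneg h1q _)
  have hBnn : 0 ≤ (s.choose m : ℝ) * p ^ m * ((1 - p) ^ (s - m) - (1 - q) ^ (s - m)) :=
    mul_nonneg (mul_nonneg hC (pow_nonneg hp m)) (by linarith)
  have hsplit : (s.choose m : ℝ) * p ^ m * (1 - p) ^ (s - m) -
      (s.choose m : ℝ) * q ^ m * (1 - q) ^ (s - m) =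
      -((s.choose m : ℝ) * (q ^ m - p ^ m) * (1 - q) ^ (s - m)) +
      (s.choose m : ℝ) * p ^ m * ((1 - p) ^ (s - m) - (1 - q) ^ (s - m)) := by ring
  rw [abs_le]
  constructor <;> linarith
end

section
/- For any natural number s and any p ∈ (0,1), the derivative with respect to p of P(Bin(s,p)=m) = C(s,m) p^m (1−p)^{s−m} has absolute value at most s, for every m ≤ s. -/
lemma binom_term_le_one (n k : ℕ) (hk : k ≤ n) (p : ℝ) (h0 : 0 ≤ p) (h1 : p ≤ 1) :
    (n.choose k : ℝ) * p ^ k * (1 - p) ^ (n - k) ≤ 1 := by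
  have hsum : ∑ i ∈ Finset.range (n + 1), p ^ i * (1 - p) ^ (n - i) * (n.choose i : ℝ) = 1 := by
    have := add_pow p (1 - p) n
    simp only [add_sub_cancel, one_pow] at this
    linarith [this]
  calc (n.choose k : ℝ) * p ^ k * (1 - p) ^ (n - k)
      = p ^ k * (1 - p) ^ (n - k) * (n.choose k : ℝ) := by ring
    _ ≤ ∑ i ∈ Finset.range (n + 1), p ^ i * (1 - p) ^ (n - i) * (n.choose i : ℝ) := by
        apply Finset.single_le_sum (f := fun i => p ^ i * (1 - p) ^ (n - i) * (n.choose i : ℝ))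
        · intro i _
          have : (0:ℝ) ≤ 1 - p := by linarith
          positivity
        · exact Finset.mem_range.mpr (by omega)
    _ = 1 := hsum

lemma binom_aux (s m : ℕ) (hm : m ≤ s) (p : ℝ) (h0 : 0 ≤ p) (h1 : p ≤ 1) :
    (s.choose m : ℝ) * m * p ^ (m - 1) * (1 - p) ^ (s - m) ≤ s := by
  cases m with
  | zero => simp
  | succ k =>
    have hk : k ≤ s - 1 := by omega
    have hs : s - 1 + 1 = s := by omega
    have hterm := binom_term_le_one (s - 1) k hk p h0 h1
    have hn : s * ((s - 1).choose k) = s.choose (k + 1) * (k + 1) := by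
      have := Nat.add_one_mul_choose_eq (s - 1) k
      simpa [Nat.succ_eq_add_one, hs] using this
    have hmul : (s.choose (k + 1) : ℝ) * ((k : ℝ) + 1) = s * ((s - 1).choose k) := by
      exact_mod_cast hn.symm
    have hsub : s - (k + 1) = s - 1 - k := by omega
    have h1p : (0:ℝ) ≤ 1 - p := by linarith
    calc (s.choose (k + 1) : ℝ) * ((k + 1 : ℕ) : ℝ) * p ^ (k + 1 - 1) * (1 - p) ^ (s - (k + 1))
        = (s.choose (k + 1) : ℝ) * ((k : ℝ) + 1) * (p ^ k * (1 - p) ^ (s - 1 - k)) := by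
          rw [hsub, Nat.add_sub_cancel]; push_cast; ring
      _ = s * (((s - 1).choose k : ℝ) * p ^ k * (1 - p) ^ (s - 1 - k)) := by
          rw [hmul]; ring
      _ ≤ s * 1 := by
          apply mul_le_mul_of_nonneg_left hterm (by positivity)
      _ = s := mul_one _

theorem binomial_pmf_deriv_bound (s m : ℕ) (hm : m ≤ s) (p : ℝ)
    (hp : p ∈ Set.Ioo (0 : ℝ) 1) :
    |deriv (fun q : ℝ => (s.choose m : ℝ) * q ^ m * (1 - q) ^ (s - m)) p| ≤ s := by
  obtain ⟨hp0, hp1⟩ := hp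
  have h1p : (0:ℝ) < 1 - p := by linarith
  have hd1 : HasDerivAt (fun q : ℝ => (1 - q)) (-1) p := by
    simpa using (hasDerivAt_id p).const_sub 1
  have hd2 : HasDerivAt (fun q : ℝ => (1 - q) ^ (s - m))
      ((s - m : ℕ) * (1 - p) ^ (s - m - 1) * (-1)) p := hd1.pow _
  have hd3 : HasDerivAt (fun q : ℝ => (s.choose m : ℝ) * q ^ m)
      ((s.choose m : ℝ) * ((m : ℝ) * p ^ (m - 1))) p :=
    (hasDerivAt_pow m p).const_mul _
  have hd : HasDerivAt (fun q : ℝ => (s.choose m : ℝ) * q ^ m * (1 - q) ^ (s - m))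
      ((s.choose m : ℝ) * ((m : ℝ) * p ^ (m - 1)) * (1 - p) ^ (s - m)
        + ((s.choose m : ℝ) * p ^ m) * ((s - m : ℕ) * (1 - p) ^ (s - m - 1) * (-1))) p :=
    hd3.mul hd2
  set a : ℝ := (s.choose m : ℝ) * m * p ^ (m - 1) * (1 - p) ^ (s - m) with ha_def
  set b : ℝ := (s.choose m : ℝ) * ((s - m : ℕ) : ℝ) * (1 - p) ^ (s - m - 1) * p ^ m with hb_def
  have hderiv : deriv (fun q : ℝ => (s.choose m : ℝ) * q ^ m * (1 - q) ^ (s - m)) p = a - b := by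
    rw [hd.deriv, ha_def, hb_def]; ring
  have ha0 : 0 ≤ a := by rw [ha_def]; positivity
  have hb0 : 0 ≤ b := by rw [hb_def]; positivity
  have haS : a ≤ s := binom_aux s m hm p hp0.le hp1.le
  have hbS : b ≤ s := by
    have := binom_aux s (s - m) (Nat.sub_le s m) (1 - p) h1p.le (by linarith)
    rw [Nat.choose_symm hm, Nat.sub_sub_self hm] at this
    calc b = (s.choose m : ℝ) * ((s - m : ℕ) : ℝ) * (1 - p) ^ (s - m - 1)
        * (1 - (1 - p)) ^ m := by rw [hb_def]; ring_nf
      _ ≤ s := this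
  rw [hderiv, abs_le]
  constructor <;> linarith
end

section
/- For a δ-regular degree distribution (g(z) = z^δ with integer δ ≥ 3), the generating function of the observed degree distribution, g^obs(z) = z·δ·∫_0^1 t^{δ−1}·(1 − (1−z)·t^{δ(δ−2)})^{δ−1} dt, has coefficients a^obs_{m+1} = Γ(δ)·Γ(m + 1/(δ−2)) / (Γ(δ + 1/(δ−2))·(δ−2)·m!) for 0 ≤ m ≤ δ−1, and a^obs_{m+1} = 0 for m ≥ δ. -/
lemma sumB (N : ℕ) : ∀ x : ℝ, 0 < x →
    ∑ j ∈ Finset.range (N+1), (-1:ℝ)^j * (N.choose j) / (x + j)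
      = N.factorial / ∏ i ∈ Finset.range (N+1), (x + i) := by
  induction N with
  | zero => intro x hx; simp
  | succ N ih =>
    intro x hx
    have hsplit : ∀ j ∈ Finset.range (N+2),
        (-1:ℝ)^j * ((N+1).choose j) / (x + j)
          = (-1:ℝ)^j * (N.choose j) / (x + j)
            + (-1:ℝ)^j * (if j = 0 then (0:ℝ) else (N.choose (j-1) : ℝ)) / (x + j) := by
      intro j _
      match j with
      | 0 => simp
      | k+1 =>
        simp only [Nat.choose_succ_succ, Nat.add_sub_cancel, if_neg (Nat.succ_ne_zero k)]
        push_cast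
        ring
    rw [Finset.sum_congr rfl hsplit, Finset.sum_add_distrib]
    have h1 : ∑ j ∈ Finset.range (N+2), (-1:ℝ)^j * (N.choose j) / (x + j)
        = (N.factorial : ℝ) / ∏ i ∈ Finset.range (N+1), (x + i) := by
      rw [Finset.sum_range_succ, Nat.choose_succ_self]
      simp [ih x hx]
    have h2 : ∑ j ∈ Finset.range (N+2),
        (-1:ℝ)^j * (if j = 0 then (0:ℝ) else (N.choose (j-1) : ℝ)) / (x + j)
        = -((N.factorial : ℝ) / ∏ i ∈ Finset.range (N+1), ((x+1) + i)) := by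
      rw [Finset.sum_range_succ']
      have hterm : ∀ i ∈ Finset.range (N+1),
          (-1:ℝ)^(i+1) * (if i+1 = 0 then (0:ℝ) else (N.choose (i+1-1) : ℝ)) / (x + ↑(i+1))
            = -((-1:ℝ)^i * (N.choose i) / ((x+1) + i)) := by
        intro i _
        simp only [if_neg (Nat.succ_ne_zero i), Nat.add_sub_cancel]
        push_cast
        ring
      rw [Finset.sum_congr rfl hterm, Finset.sum_neg_distrib, ih (x+1) (by linarith)]
      simp
    rw [h1, h2]
    have hq : (0:ℝ) < ∏ i ∈ Finset.range (N+1), ((x+1) + i) :=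
      Finset.prod_pos (fun i _ => by positivity)
    have hp : (0:ℝ) < ∏ i ∈ Finset.range (N+1), (x + i) :=
      Finset.prod_pos (fun i _ => by positivity)
    have hpq : (∏ i ∈ Finset.range (N+1), (x + i)) * (x + (N+1))
        = x * ∏ i ∈ Finset.range (N+1), ((x+1) + i) := by
      have e1 : ∏ i ∈ Finset.range (N+2), (x + i) =
          (∏ i ∈ Finset.range (N+1), (x + i)) * (x + (N+1)) := by
        rw [Finset.prod_range_succ]; push_cast; ring_nf
      have e2 : ∏ i ∈ Finset.range (N+2), (x + i) =
          x * ∏ i ∈ Finset.range (N+1), ((x+1) + i) := by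
        rw [Finset.prod_range_succ']
        simp only [Nat.cast_zero, add_zero]
        rw [mul_comm]
        congr 1
        apply Finset.prod_congr rfl; intro i _; push_cast; ring
      rw [← e1, e2]
    have hgoal : ((N+1).factorial : ℝ) / ∏ i ∈ Finset.range (N+2), (x + i)
        = (N.factorial:ℝ) / ∏ i ∈ Finset.range (N+1), (x + i)
          - (N.factorial:ℝ) / ∏ i ∈ Finset.range (N+1), ((x+1) + i) := by
      have e1 : ∏ i ∈ Finset.range (N+2), (x + i) =
          (∏ i ∈ Finset.range (N+1), (x + i)) * (x + (N+1)) := by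
        rw [Finset.prod_range_succ]; push_cast; ring_nf
      rw [e1, Nat.factorial_succ]
      push_cast
      rw [div_sub_div _ _ hp.ne' hq.ne',
        div_eq_div_iff (mul_pos hp (by positivity)).ne' (mul_pos hp hq).ne']
      linear_combination ((N.factorial:ℝ) * ∏ i ∈ Finset.range (N+1), (x + ↑i)) * hpq
    linarith [hgoal]

lemma gammaProd (x : ℝ) (hx : 0 < x) (n : ℕ) :
    Real.Gamma (x + n) = Real.Gamma x * ∏ i ∈ Finset.range n, (x + i) := by
  induction n with
  | zero => simp
  | succ n ih =>
    have h : x + ((n:ℝ)+1) = (x + n) + 1 := by ring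
    push_cast
    rw [h, Real.Gamma_add_one (by positivity), ih, Finset.prod_range_succ]
    ring

lemma integralExpand (n N a : ℕ) (w : ℝ) :
    ∫ t in (0:ℝ)..1, t^a * (1 - w*t^N)^n
      = ∑ k ∈ Finset.range (n+1), (n.choose k : ℝ) * (-w)^k / (a + N*k + 1) := by
  have h : ∀ t:ℝ, t^a * (1 - w*t^N)^n
      = ∑ k ∈ Finset.range (n+1), (n.choose k:ℝ) * (-w)^k * t^(a + N*k) := by
    intro t
    rw [show (1 - w*t^N) = (-(w*t^N)) + 1 by ring, add_pow, Finset.mul_sum]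
    apply Finset.sum_congr rfl
    intro k _
    rw [neg_pow, mul_pow, one_pow, pow_add, pow_mul, neg_pow w]
    ring
  simp_rw [h]
  rw [intervalIntegral.integral_finset_sum]
  · apply Finset.sum_congr rfl
    intro k _
    rw [intervalIntegral.integral_const_mul, integral_pow]
    push_cast
    ring
  · intro k _
    apply Continuous.intervalIntegrable
    continuity

lemma coeffId (δ m : ℕ) (hδ : 3 ≤ δ) (hm : m < δ) :
    ∑ k ∈ Finset.range δ, (-1:ℝ)^(k-m) * ((δ-1).choose k) * (k.choose m) / (1 + ((δ:ℝ)-2)*k)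
      = Real.Gamma δ * Real.Gamma (m + 1/((δ:ℝ)-2)) /
          (Real.Gamma (δ + 1/((δ:ℝ)-2)) * ((δ:ℝ)-2) * m.factorial) := by
  have hd2 : (0:ℝ) < (δ:ℝ) - 2 := by
    have : (3:ℝ) ≤ δ := by exact_mod_cast hδ
    linarith
  set c : ℝ := 1/((δ:ℝ)-2) with hc
  have hcpos : 0 < c := by positivity
  have h1c : ((δ:ℝ)-2) * c = 1 := by
    rw [hc]; field_simp
  have hxpos : 0 < (m:ℝ) + c := by positivity
  -- restrict to Ico m δ
  have h1 : ∑ k ∈ Finset.range δ,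
        (-1:ℝ)^(k-m) * ((δ-1).choose k) * (k.choose m) / (1 + ((δ:ℝ)-2)*k)
      = ∑ k ∈ Finset.Ico m δ,
        (-1:ℝ)^(k-m) * ((δ-1).choose k) * (k.choose m) / (1 + ((δ:ℝ)-2)*k) := by
    refine (Finset.sum_subset ?_ ?_).symm
    · rw [Finset.range_eq_Ico]; exact Finset.Ico_subset_Ico (Nat.zero_le m) le_rfl
    · intro k hk hk2
      have : k < m := by
        simp only [Finset.mem_range, Finset.mem_Ico, not_and, not_le] at hk hk2
        omega
      rw [Nat.choose_eq_zero_of_lt this]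
      simp
  rw [h1, Finset.sum_Ico_eq_sum_range]
  -- rewrite each term
  have h2 : ∀ j ∈ Finset.range (δ - m),
      (-1:ℝ)^(m+j-m) * ((δ-1).choose (m+j)) * ((m+j).choose m) / (1 + ((δ:ℝ)-2)*(↑(m+j)))
        = (((δ-1).choose m : ℝ) * c) * ((-1:ℝ)^j * ((δ-1-m).choose j) / (((m:ℝ)+c) + j)) := by
    intro j hj
    have hj' : j < δ - m := Finset.mem_range.mp hj
    have hle : m + j ≤ δ - 1 := by omega
    have hch : ((δ-1).choose (m+j) : ℝ) * ((m+j).choose m) =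
        ((δ-1).choose m : ℝ) * ((δ-1-m).choose j) := by
      have := Nat.choose_mul (n := δ - 1) (Nat.le_add_right m j)
      rw [Nat.add_sub_cancel_left] at this
      exact_mod_cast congrArg (Nat.cast : ℕ → ℝ) this
    have hden : 1 + ((δ:ℝ)-2)*(↑(m+j)) = ((δ:ℝ)-2) * (((m:ℝ)+c) + j) := by
      push_cast
      linear_combination -h1c
    have hs0 : ((m:ℝ)+c+(j:ℝ)) ≠ 0 := by positivity
    rw [Nat.add_sub_cancel_left, hden, mul_assoc, hch, ← mul_div_assoc,
      div_eq_div_iff (by positivity) hs0]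
    linear_combination (-((-1:ℝ)^j * (((δ-1).choose m : ℝ) * (((δ-1-m).choose j : ℝ)))
      * (((m:ℝ)+c) + (j:ℝ)))) * h1c
  rw [Finset.sum_congr rfl h2, ← Finset.mul_sum]
  have hdm : δ - m = (δ - 1 - m) + 1 := by omega
  rw [hdm, sumB (δ-1-m) ((m:ℝ)+c) hxpos]
  -- Gamma side
  have hGδ : Real.Gamma (δ:ℝ) = ((δ-1).factorial : ℝ) := by
    have : (δ:ℝ) = ((δ-1 : ℕ):ℝ) + 1 := by
      have : δ - 1 + 1 = δ := by omega
      exact_mod_cast (congrArg (Nat.cast : ℕ → ℝ) this).symm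
    rw [this, Real.Gamma_nat_eq_factorial]
  have hGsum : Real.Gamma ((δ:ℝ) + c)
      = Real.Gamma ((m:ℝ) + c) * ∏ i ∈ Finset.range ((δ-1-m)+1), ((m:ℝ)+c + i) := by
    have harg : (δ:ℝ) + c = ((m:ℝ) + c) + ((δ - m : ℕ):ℝ) := by
      have : ((δ - m : ℕ):ℝ) = (δ:ℝ) - m := by
        push_cast [Nat.cast_sub hm.le]; ring
      rw [this]; ring
    rw [harg, gammaProd _ hxpos, ← hdm]
  have hGpos : 0 < Real.Gamma ((m:ℝ) + c) := Real.Gamma_pos_of_pos hxpos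
  have hPpos : (0:ℝ) < ∏ i ∈ Finset.range ((δ-1-m)+1), ((m:ℝ)+c + i) :=
    Finset.prod_pos (fun i _ => by positivity)
  have hfact : ((δ-1).choose m : ℝ) * (m.factorial) * ((δ-1-m).factorial)
      = ((δ-1).factorial : ℝ) := by
    exact_mod_cast congrArg (Nat.cast : ℕ → ℝ)
      (Nat.choose_mul_factorial_mul_factorial (by omega : m ≤ δ - 1))
  have hmf : (0:ℝ) < (m.factorial : ℝ) := by exact_mod_cast m.factorial_pos
  rw [hGδ, hGsum,
    show ((δ-1).factorial:ℝ) * Real.Gamma ((m:ℝ)+c) = Real.Gamma ((m:ℝ)+c) * ((δ-1).factorial:ℝ)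
      from mul_comm _ _,
    show Real.Gamma ((m:ℝ)+c) * (∏ i ∈ Finset.range ((δ-1-m)+1), ((m:ℝ)+c + i)) * ((δ:ℝ)-2)
        * (m.factorial:ℝ)
      = Real.Gamma ((m:ℝ)+c) *
        ((∏ i ∈ Finset.range ((δ-1-m)+1), ((m:ℝ)+c + i)) * (((δ:ℝ)-2) * (m.factorial:ℝ)))
      from by ring,
    mul_div_mul_left _ _ hGpos.ne', mul_div_assoc',
    div_eq_div_iff hPpos.ne' (by positivity)]
  linear_combination
    ((((δ-1).choose m : ℝ)) * (((δ-1-m).factorial:ℝ)) * ((m.factorial:ℝ))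
      * (∏ i ∈ Finset.range ((δ-1-m)+1), ((m:ℝ)+c + i))) * h1c
    + (∏ i ∈ Finset.range ((δ-1-m)+1), ((m:ℝ)+c + i)) * hfact

theorem regular_graph_observed_degrees (δ : ℕ) (hδ : 3 ≤ δ) :
    ∀ z : ℝ,
      z * δ * ∫ t in (0 : ℝ)..1,
          t ^ (δ - 1) * (1 - (1 - z) * t ^ (δ * (δ - 2))) ^ (δ - 1)
        = ∑ m ∈ Finset.range δ,
            (Real.Gamma δ * Real.Gamma (m + 1 / ((δ : ℝ) - 2)) /
              (Real.Gamma (δ + 1 / ((δ : ℝ) - 2)) * ((δ : ℝ) - 2) * (Nat.factorial m)))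
              * z ^ (m + 1) := by
  intro z
  have hδ1 : δ - 1 + 1 = δ := by omega
  have hd2 : (0:ℝ) < (δ:ℝ) - 2 := by
    have : (3:ℝ) ≤ δ := by exact_mod_cast hδ
    linarith
  have hδR : (0:ℝ) < (δ:ℝ) := by linarith
  rw [integralExpand (δ-1) (δ*(δ-2)) (δ-1) (1-z), hδ1, Finset.mul_sum]
  have hstep : ∀ k ∈ Finset.range δ,
      z * (δ:ℝ) * (((δ-1).choose k : ℝ) * (-(1-z))^k / (↑(δ-1) + ↑(δ*(δ-2))*(k:ℝ) + 1))
        = ∑ m ∈ Finset.range δ,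
            z^(m+1) * ((-1:ℝ)^(k-m) * ((δ-1).choose k) * (k.choose m) / (1 + ((δ:ℝ)-2)*k)) := by
    intro k hk
    have hkδ : k + 1 ≤ δ := Finset.mem_range.mp hk
    have hQ : (0:ℝ) < 1 + ((δ:ℝ)-2)*k := by positivity
    have hE : ((δ-1 : ℕ):ℝ) + ((δ*(δ-2) : ℕ):ℝ)*(k:ℝ) + 1 = (δ:ℝ) * (1 + ((δ:ℝ)-2)*k) := by
      push_cast [Nat.cast_sub (by omega : 1 ≤ δ), Nat.cast_sub (by omega : 2 ≤ δ)]
      ring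
    rw [hE, show -(1-z) = z + (-1) from by ring, add_pow]
    rw [Finset.sum_subset (Finset.range_subset_range.mpr hkδ) (by
      intro m _ hm2
      have : k < m := by simpa using Finset.mem_range.not.mp hm2 -- fix below
      rw [Nat.choose_eq_zero_of_lt this]
      simp)]
    rw [show z * (δ:ℝ) * (((δ-1).choose k : ℝ) *
          (∑ m ∈ Finset.range δ, z^m * (-1:ℝ)^(k-m) * (k.choose m)) / ((δ:ℝ) * (1 + ((δ:ℝ)-2)*k)))
        = (z * (δ:ℝ) * ((δ-1).choose k : ℝ) / ((δ:ℝ) * (1 + ((δ:ℝ)-2)*k)))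
          * ∑ m ∈ Finset.range δ, z^m * (-1:ℝ)^(k-m) * (k.choose m) from by ring,
      Finset.mul_sum]
    apply Finset.sum_congr rfl
    intro m _
    field_simp
    ring
  rw [Finset.sum_congr rfl hstep, Finset.sum_comm]
  apply Finset.sum_congr rfl
  intro m hm
  rw [← Finset.mul_sum, coeffId δ m hδ (Finset.mem_range.mp hm), mul_comm]
end

section
/- Let δ ≥ 3 be an integer and a^obs_{m+1} = Γ(δ)·Γ(m + 1/(δ−2)) / (Γ(δ + 1/(δ−2))·(δ−2)·m!). Then for all 2 ≤ m ≤ δ−1, m^{−1} / (δ^{1/(δ−2)}·(δ−2)) < a^obs_{m+1} < m^{−1 + 1/(δ−2)} / (δ−2). -/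
lemma gamma_logconvex_step (x ε : ℝ) (hx : 0 < x) (hε0 : 0 ≤ ε) (hε1 : ε ≤ 1) :
    Real.Gamma (x + ε) ≤ Real.Gamma x ^ (1 - ε) * Real.Gamma (x + 1) ^ ε := by
  have hx1 : (0:ℝ) < x + 1 := by linarith
  have hxe : (0:ℝ) < x + ε := by linarith
  have h := Real.convexOn_log_Gamma.2 (Set.mem_Ioi.mpr hx) (Set.mem_Ioi.mpr hx1)
      (by linarith : (0:ℝ) ≤ 1 - ε) hε0 (by ring)
  simp only [smul_eq_mul, Function.comp_apply] at h
  have hpt : (1 - ε) * x + ε * (x + 1) = x + ε := by ring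
  rw [hpt] at h
  have hgx := Real.Gamma_pos_of_pos hx
  have hgx1 := Real.Gamma_pos_of_pos hx1
  calc Real.Gamma (x + ε) = Real.exp (Real.log (Real.Gamma (x + ε))) :=
        (Real.exp_log (Real.Gamma_pos_of_pos hxe)).symm
    _ ≤ Real.exp ((1 - ε) * Real.log (Real.Gamma x) + ε * Real.log (Real.Gamma (x + 1))) :=
        Real.exp_le_exp.mpr h
    _ = Real.Gamma x ^ (1 - ε) * Real.Gamma (x + 1) ^ ε := by
        rw [Real.exp_add, Real.rpow_def_of_pos hgx, Real.rpow_def_of_pos hgx1,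
          mul_comm (Real.log (Real.Gamma x)), mul_comm (Real.log (Real.Gamma (x+1)))]

theorem regular_powerlaw_sandwich (δ m : ℕ) (hδ : 3 ≤ δ) (hm : 2 ≤ m)
    (hmδ : m ≤ δ - 1) :
    (m : ℝ) ^ (-(1 : ℝ)) / ((δ : ℝ) ^ ((1 : ℝ) / ((δ : ℝ) - 2)) * ((δ : ℝ) - 2)) <
      Real.Gamma δ * Real.Gamma (m + 1 / ((δ : ℝ) - 2)) /
        (Real.Gamma (δ + 1 / ((δ : ℝ) - 2)) * ((δ : ℝ) - 2) * (Nat.factorial m)) ∧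
    Real.Gamma δ * Real.Gamma (m + 1 / ((δ : ℝ) - 2)) /
        (Real.Gamma (δ + 1 / ((δ : ℝ) - 2)) * ((δ : ℝ) - 2) * (Nat.factorial m)) <
      (m : ℝ) ^ (-1 + (1 : ℝ) / ((δ : ℝ) - 2)) / ((δ : ℝ) - 2) := by
  have hδR : (3:ℝ) ≤ (δ:ℝ) := by exact_mod_cast hδ
  have hmR : (2:ℝ) ≤ (m:ℝ) := by exact_mod_cast hm
  set ε : ℝ := 1 / ((δ:ℝ) - 2) with hεdef
  have hC : (1:ℝ) ≤ (δ:ℝ) - 2 := by linarith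
  have hC0 : (0:ℝ) < (δ:ℝ) - 2 := by linarith
  have hε0 : 0 < ε := by positivity
  have hε1 : ε ≤ 1 := by
    rw [hεdef, div_le_one hC0]; linarith
  have hδ0 : (0:ℝ) < (δ:ℝ) := by linarith
  have hm0 : (0:ℝ) < (m:ℝ) := by linarith
  -- Gamma values and positivity
  have hG1 : 0 < Real.Gamma (δ:ℝ) := Real.Gamma_pos_of_pos hδ0
  have hG2 : 0 < Real.Gamma ((m:ℝ) + ε) := Real.Gamma_pos_of_pos (by linarith)
  have hG3 : 0 < Real.Gamma ((δ:ℝ) + ε) := Real.Gamma_pos_of_pos (by linarith)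
  have hGm : 0 < Real.Gamma (m:ℝ) := Real.Gamma_pos_of_pos hm0
  have hF : (0:ℝ) < (Nat.factorial m : ℝ) := by positivity
  -- Γ(m+1) = m! and Γ(m+1) = m Γ(m)
  have hfact : Real.Gamma ((m:ℝ) + 1) = (Nat.factorial m : ℝ) := by
    exact_mod_cast Real.Gamma_nat_eq_factorial m
  have hmGm : (m:ℝ) * Real.Gamma (m:ℝ) = (Nat.factorial m : ℝ) := by
    rw [← hfact, Real.Gamma_add_one (by positivity)]
  have hδGδ : Real.Gamma ((δ:ℝ) + 1) = (δ:ℝ) * Real.Gamma (δ:ℝ) :=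
    Real.Gamma_add_one (by positivity)
  -- log-convexity bounds
  have hkey1 : Real.Gamma ((δ:ℝ) + ε) ≤ Real.Gamma (δ:ℝ) * (δ:ℝ) ^ ε := by
    have h := gamma_logconvex_step (δ:ℝ) ε hδ0 hε0.le hε1
    rw [hδGδ, Real.mul_rpow hδ0.le hG1.le] at h
    calc Real.Gamma ((δ:ℝ) + ε)
        ≤ Real.Gamma (δ:ℝ) ^ (1 - ε) * ((δ:ℝ) ^ ε * Real.Gamma (δ:ℝ) ^ ε) := h
      _ = Real.Gamma (δ:ℝ) ^ (1 - ε + ε) * (δ:ℝ) ^ ε := by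
          rw [Real.rpow_add hG1]; ring
      _ = Real.Gamma (δ:ℝ) * (δ:ℝ) ^ ε := by norm_num
  have hkey2 : Real.Gamma ((m:ℝ) + ε) ≤ Real.Gamma (m:ℝ) * (m:ℝ) ^ ε := by
    have h := gamma_logconvex_step (m:ℝ) ε hm0 hε0.le hε1
    rw [Real.Gamma_add_one (by positivity), Real.mul_rpow hm0.le hGm.le] at h
    calc Real.Gamma ((m:ℝ) + ε)
        ≤ Real.Gamma (m:ℝ) ^ (1 - ε) * ((m:ℝ) ^ ε * Real.Gamma (m:ℝ) ^ ε) := h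
      _ = Real.Gamma (m:ℝ) ^ (1 - ε + ε) * (m:ℝ) ^ ε := by
          rw [Real.rpow_add hGm]; ring
      _ = Real.Gamma (m:ℝ) * (m:ℝ) ^ ε := by norm_num
  -- strict monotonicity bounds
  have hstrict1 : Real.Gamma (δ:ℝ) < Real.Gamma ((δ:ℝ) + ε) :=
    Real.Gamma_strictMonoOn_Ici (by simp only [Set.mem_Ici]; linarith)
      (by simp only [Set.mem_Ici]; linarith) (by linarith)
  have hstrict2 : Real.Gamma (m:ℝ) < Real.Gamma ((m:ℝ) + ε) :=
    Real.Gamma_strictMonoOn_Ici (by simp only [Set.mem_Ici]; linarith)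
      (by simp only [Set.mem_Ici]; linarith) (by linarith)
  have hpδε : (0:ℝ) < (δ:ℝ) ^ ε := Real.rpow_pos_of_pos hδ0 ε
  have hpmε : (0:ℝ) < (m:ℝ) ^ ε := Real.rpow_pos_of_pos hm0 ε
  constructor
  · -- lower bound
    rw [Real.rpow_neg_one, div_lt_div_iff₀ (by positivity) (by positivity)]
    -- goal: (m)⁻¹ * (Γ(δ+ε)*(δ-2)*m!) < Γδ*Γ(m+ε)*((δ)^ε*(δ-2))
    have h1 : Real.Gamma ((δ:ℝ) + ε) * (Nat.factorial m : ℝ)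
        < Real.Gamma (δ:ℝ) * (δ:ℝ) ^ ε * (Real.Gamma ((m:ℝ) + ε) * (m:ℝ)) := by
      have h2 : Real.Gamma ((δ:ℝ) + ε) * (Nat.factorial m : ℝ)
          ≤ Real.Gamma (δ:ℝ) * (δ:ℝ) ^ ε * (Nat.factorial m : ℝ) := by
        apply mul_le_mul_of_nonneg_right hkey1 hF.le
      have h3 : (Nat.factorial m : ℝ) < Real.Gamma ((m:ℝ) + ε) * (m:ℝ) := by
        rw [← hmGm]; nlinarith
      nlinarith [mul_pos hG1 hpδε]
    have hminv : ((m:ℝ))⁻¹ * ((m:ℝ)) = 1 := inv_mul_cancel₀ (ne_of_gt hm0)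
    nlinarith [mul_pos (mul_pos hG3 hF) hC0, mul_pos hG3 hF]
  · -- upper bound
    rw [show (-1 + ε) = (ε - 1) by ring, div_lt_div_iff₀ (by positivity) hC0]
    have h1 : Real.Gamma (δ:ℝ) * Real.Gamma ((m:ℝ) + ε)
        < Real.Gamma ((δ:ℝ) + ε) * ((Nat.factorial m : ℝ) * (m:ℝ) ^ (ε - 1)) := by
      have h2 : Real.Gamma ((m:ℝ) + ε) ≤ (Nat.factorial m : ℝ) * (m:ℝ) ^ (ε - 1) := by
        calc Real.Gamma ((m:ℝ) + ε) ≤ Real.Gamma (m:ℝ) * (m:ℝ) ^ ε := hkey2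
          _ = (Nat.factorial m : ℝ) * (m:ℝ) ^ (ε - 1) := by
              rw [show (ε - 1) = ε + (-1) by ring, Real.rpow_add hm0, Real.rpow_neg_one,
                ← hmGm]
              field_simp
      have hp : (0:ℝ) < (Nat.factorial m : ℝ) * (m:ℝ) ^ (ε - 1) := by
        have := Real.rpow_pos_of_pos hm0 (ε - 1); positivity
      calc Real.Gamma (δ:ℝ) * Real.Gamma ((m:ℝ) + ε)
          ≤ Real.Gamma (δ:ℝ) * ((Nat.factorial m : ℝ) * (m:ℝ) ^ (ε - 1)) :=
            mul_le_mul_of_nonneg_left h2 hG1.le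
        _ < Real.Gamma ((δ:ℝ) + ε) * ((Nat.factorial m : ℝ) * (m:ℝ) ^ (ε - 1)) :=
            mul_lt_mul_of_pos_right hstrict1 hp
    have h3 : Real.Gamma ((δ:ℝ) + ε) * ((Nat.factorial m : ℝ) * (m:ℝ) ^ (ε - 1)) * ((δ:ℝ) - 2)
        = (m:ℝ) ^ (ε - 1) * (Real.Gamma ((δ:ℝ) + ε) * ((δ:ℝ) - 2) * (Nat.factorial m : ℝ)) := by
      ring
    linarith [mul_lt_mul_of_pos_right h1 hC0, h3]
end

section
/- For δ > 0 and z ∈ [0,1), Ei(−δ(1−z)) = Ei(−δ) − Σ_{k=1}^∞ (Γ(k,δ)/Γ(k))·(z^k/k), where Γ(k,δ) = ∫_δ^∞ x^{k−1} e^{−x} dx is the upper incomplete Gamma function. -/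
/-- Exponential integral Ei(z) = -∫_{-z}^∞ e^{-x}/x dx. -/
noncomputable def Ei (z : ℝ) : ℝ := -∫ x in Set.Ioi (-z), Real.exp (-x) / x

/-- Upper incomplete Gamma function Γ(a, x) = ∫_x^∞ t^{a-1} e^{-t} dt. -/
noncomputable def GammaInc (a x : ℝ) : ℝ :=
  ∫ t in Set.Ioi x, t ^ (a - 1) * Real.exp (-t)

open MeasureTheory Set Real

/-- Shifted exponential series. -/
lemma exp_series_shift (x : ℝ) :
    ∑' k : ℕ, x ^ (k + 1) / ((k + 1).factorial : ℝ) = Real.exp x - 1 := by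
  have hs : Summable (fun n : ℕ => x ^ n / (n.factorial : ℝ)) :=
    Real.summable_pow_div_factorial x
  have hexp : Real.exp x = ∑' n : ℕ, x ^ n / (n.factorial : ℝ) := by
    rw [Real.exp_eq_exp_ℝ, NormedSpace.exp_eq_tsum_div]
  have h0 := Summable.tsum_eq_zero_add hs
  simp only [pow_zero, Nat.factorial_zero, Nat.cast_one, div_one] at h0
  rw [hexp, h0]
  ring

/-- Pointwise identity for the summed integrand. -/
lemma pointwise_sum (z t : ℝ) (ht : 0 < t) :
    ∑' k : ℕ, (z ^ (k + 1) / ((k.factorial : ℝ) * (k + 1))) * (t ^ k * Real.exp (-t)) =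
      (Real.exp (-((1 - z) * t)) - Real.exp (-t)) / t := by
  have hterm : ∀ k : ℕ,
      (z ^ (k + 1) / ((k.factorial : ℝ) * (k + 1))) * (t ^ k * Real.exp (-t)) =
        (Real.exp (-t) / t) * ((t * z) ^ (k + 1) / (((k + 1).factorial : ℝ))) := by
    intro k
    have hf : ((k.factorial : ℝ)) ≠ 0 := Nat.cast_ne_zero.2 k.factorial_ne_zero
    have hk1 : ((k : ℝ) + 1) ≠ 0 := by positivity
    rw [Nat.factorial_succ]
    push_cast
    field_simp
    ring
  rw [tsum_congr hterm, tsum_mul_left, exp_series_shift]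
  rw [eq_div_iff ht.ne']
  have : Real.exp (-t) * Real.exp (t * z) = Real.exp (-((1 - z) * t)) := by
    rw [← Real.exp_add]; ring_nf
  field_simp
  nlinarith [this, show Real.exp (-(t * (1 - z))) = Real.exp (-((1 - z) * t)) by ring_nf]

lemma integrableOn_pow_mul_exp (k : ℕ) :
    IntegrableOn (fun t : ℝ => t ^ k * Real.exp (-t)) (Set.Ioi (0 : ℝ)) := by
  have h := Real.GammaIntegral_convergent (s := (k : ℝ) + 1) (by positivity)
  refine h.congr_fun (fun t ht => ?_) measurableSet_Ioi
  dsimp only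
  rw [show ((k : ℝ) + 1 - 1) = (k : ℝ) by ring, Real.rpow_natCast, mul_comm]

lemma integrableOn_exp_mul_div (δ c : ℝ) (hδ : 0 < δ) (hc : 0 < c) :
    IntegrableOn (fun t : ℝ => Real.exp (-(c * t)) / t) (Set.Ioi δ) := by
  have hbase : IntegrableOn (fun t : ℝ => Real.exp (-(c * t)) / δ) (Set.Ioi δ) := by
    exact (by simpa [mul_comm] using (exp_neg_integrableOn_Ioi δ hc).div_const δ :
      Integrable (fun t : ℝ => Real.exp (-(c * t)) / δ) (volume.restrict (Set.Ioi δ)))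
  refine Integrable.mono' hbase ?_ ?_
  · refine (ContinuousOn.div ?_ continuousOn_id (fun t ht => ?_)).aestronglyMeasurable
      measurableSet_Ioi
    · exact (Real.continuous_exp.comp (by continuity)).continuousOn
    · exact (hδ.trans ht).ne'
  · filter_upwards [ae_restrict_mem measurableSet_Ioi] with t ht
    have ht0 : 0 < t := hδ.trans ht
    rw [Real.norm_of_nonneg (by positivity)]
    exact div_le_div_of_nonneg_left (Real.exp_pos _).le hδ (le_of_lt ht) |>.trans_eq rfl

theorem Ei_taylor_series (δ z : ℝ) (hδ : 0 < δ) (hz : z ∈ Set.Ico (0 : ℝ) 1) :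
    Ei (-δ * (1 - z)) =
      Ei (-δ) - ∑' k : ℕ,
        (GammaInc (k + 1) δ / Real.Gamma (k + 1)) * (z ^ (k + 1) / (k + 1)) := by
  obtain ⟨hz0, hz1⟩ := hz
  have hc : 0 < 1 - z := by linarith
  set c : ℝ := 1 - z with hcdef
  -- integrability facts
  have Iint : ∀ k : ℕ, IntegrableOn (fun t : ℝ => t ^ k * Real.exp (-t)) (Set.Ioi δ) :=
    fun k => (integrableOn_pow_mul_exp k).mono_set (Set.Ioi_subset_Ioi hδ.le)
  have Iec : IntegrableOn (fun t : ℝ => Real.exp (-(c * t)) / t) (Set.Ioi δ) :=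
    integrableOn_exp_mul_div δ c hδ hc
  have Ie1 : IntegrableOn (fun t : ℝ => Real.exp (-t) / t) (Set.Ioi δ) := by
    simpa using integrableOn_exp_mul_div δ 1 hδ one_pos
  -- GammaInc evaluation
  have hGInc : ∀ k : ℕ, GammaInc (k + 1) δ = ∫ t in Set.Ioi δ, t ^ k * Real.exp (-t) := by
    intro k
    refine setIntegral_congr_fun measurableSet_Ioi (fun t ht => ?_)
    rw [show ((k : ℝ) + 1 - 1) = (k : ℝ) by ring, Real.rpow_natCast]
  -- upper bound on GammaInc integral
  have Inonneg : ∀ k : ℕ, 0 ≤ ∫ t in Set.Ioi δ, t ^ k * Real.exp (-t) := by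
    intro k
    refine setIntegral_nonneg measurableSet_Ioi (fun t ht => ?_)
    have : 0 < t := hδ.trans ht
    positivity
  have Ibound : ∀ k : ℕ, (∫ t in Set.Ioi δ, t ^ k * Real.exp (-t)) ≤ (k.factorial : ℝ) := by
    intro k
    have h1 : (∫ t in Set.Ioi δ, t ^ k * Real.exp (-t)) ≤
        ∫ t in Set.Ioi (0:ℝ), t ^ k * Real.exp (-t) := by
      refine setIntegral_mono_set (integrableOn_pow_mul_exp k) ?_
        ((Set.Ioi_subset_Ioi hδ.le).eventuallyLE)
      filter_upwards [ae_restrict_mem measurableSet_Ioi] with t ht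
      have : 0 < t := ht
      positivity
    have h2 : (∫ t in Set.Ioi (0:ℝ), t ^ k * Real.exp (-t)) = Real.Gamma ((k : ℝ) + 1) := by
      rw [Real.Gamma_eq_integral (by positivity : (0:ℝ) < (k : ℝ) + 1)]
      refine setIntegral_congr_fun measurableSet_Ioi (fun t ht => ?_)
      rw [show ((k : ℝ) + 1 - 1) = (k : ℝ) by ring, Real.rpow_natCast, mul_comm]
    have h3 : Real.Gamma ((k : ℝ) + 1) = (k.factorial : ℝ) := Real.Gamma_nat_eq_factorial k
    linarith
  -- the summand as an integral
  set g : ℕ → ℝ → ℝ := fun k t =>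
    (z ^ (k + 1) / ((k.factorial : ℝ) * (k + 1))) * (t ^ k * Real.exp (-t)) with hg
  have hgint : ∀ k : ℕ, IntegrableOn (g k) (Set.Ioi δ) := fun k => (Iint k).const_mul _
  have ha : ∀ k : ℕ,
      (GammaInc (k + 1) δ / Real.Gamma (k + 1)) * (z ^ (k + 1) / (k + 1)) =
        ∫ t in Set.Ioi δ, g k t := by
    intro k
    rw [hGInc, Real.Gamma_nat_eq_factorial]
    simp only [hg]
    rw [integral_const_mul]
    have h1 : ((k.factorial : ℝ)) ≠ 0 := Nat.cast_ne_zero.2 k.factorial_ne_zero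
    have h2 : ((k : ℝ) + 1) ≠ 0 := by positivity
    field_simp
  -- bound on each term
  have hterm_bound : ∀ k : ℕ, (∫ t in Set.Ioi δ, g k t) ≤ z ^ (k + 1) := by
    intro k
    rw [← ha k, hGInc, Real.Gamma_nat_eq_factorial]
    have hf : (0 : ℝ) < (k.factorial : ℝ) := by positivity
    have h1 : (∫ t in Set.Ioi δ, t ^ k * Real.exp (-t)) / (k.factorial : ℝ) ≤ 1 :=
      (div_le_one hf).2 (Ibound k)
    have h2 : z ^ (k + 1) / ((k : ℝ) + 1) ≤ z ^ (k + 1) :=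
      div_le_self (by positivity) (by linarith [Nat.cast_nonneg (α := ℝ) k])
    calc (∫ t in Set.Ioi δ, t ^ k * Real.exp (-t)) / (k.factorial : ℝ) *
          (z ^ (k + 1) / ((k : ℝ) + 1))
        ≤ z ^ (k + 1) / ((k : ℝ) + 1) :=
          mul_le_of_le_one_left (by positivity) h1
      _ ≤ z ^ (k + 1) := h2
  have hterm_nonneg : ∀ k : ℕ, 0 ≤ ∫ t in Set.Ioi δ, g k t := by
    intro k
    refine setIntegral_nonneg measurableSet_Ioi (fun t ht => ?_)
    have : 0 < t := hδ.trans ht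
    simp only [hg]
    positivity
  have hsummable : Summable (fun k : ℕ => ∫ t in Set.Ioi δ, g k t) := by
    refine Summable.of_nonneg_of_le hterm_nonneg hterm_bound ?_
    simpa [pow_succ, mul_comm] using (summable_geometric_of_lt_one hz0 hz1).mul_left z
  -- interchange sum and integral
  have hnorm : ∀ k : ℕ, (∫ t in Set.Ioi δ, ‖g k t‖) = ∫ t in Set.Ioi δ, g k t := by
    intro k
    refine setIntegral_congr_fun measurableSet_Ioi (fun t ht => ?_)
    have : 0 < t := hδ.trans ht
    simp only [hg]
    rw [Real.norm_of_nonneg (by positivity)]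
  have hswap : ∑' k : ℕ, (∫ t in Set.Ioi δ, g k t) =
      ∫ t in Set.Ioi δ, (∑' k : ℕ, g k t) := by
    refine integral_tsum_of_summable_integral_norm hgint ?_
    simpa only [hnorm] using hsummable
  have hclosed : (∫ t in Set.Ioi δ, (∑' k : ℕ, g k t)) =
      ∫ t in Set.Ioi δ, (Real.exp (-(c * t)) - Real.exp (-t)) / t := by
    refine setIntegral_congr_fun measurableSet_Ioi (fun t ht => ?_)
    have ht0 : 0 < t := hδ.trans ht
    simpa [hg, hcdef] using pointwise_sum z t ht0
  -- substitution
  have hsub : (∫ x in Set.Ioi (δ * c), Real.exp (-x) / x) =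
      ∫ t in Set.Ioi δ, Real.exp (-(c * t)) / t := by
    have h := integral_comp_mul_left_Ioi (fun x => Real.exp (-x) / x) δ hc
    have hL : (∫ x in Set.Ioi δ, Real.exp (-(c * x)) / (c * x)) =
        c⁻¹ * ∫ x in Set.Ioi δ, Real.exp (-(c * x)) / x := by
      rw [← integral_const_mul]
      refine setIntegral_congr_fun measurableSet_Ioi (fun t ht => ?_)
      have ht0 : 0 < t := hδ.trans ht
      field_simp
    simp only [smul_eq_mul] at h
    rw [hL] at h
    have hcne : (c : ℝ)⁻¹ ≠ 0 := inv_ne_zero hc.ne'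
    have h2 := mul_left_cancel₀ hcne h
    rw [mul_comm δ c]
    exact h2.symm
  -- assemble
  have hEiz : Ei (-δ * (1 - z)) = -∫ t in Set.Ioi δ, Real.exp (-(c * t)) / t := by
    rw [Ei, show -(-δ * (1 - z)) = δ * c by rw [hcdef]; ring, hsub]
  have hEi : Ei (-δ) = -∫ t in Set.Ioi δ, Real.exp (-t) / t := by
    rw [Ei, neg_neg]
  have hsplit : (∫ t in Set.Ioi δ, (Real.exp (-(c * t)) - Real.exp (-t)) / t) =
      (∫ t in Set.Ioi δ, Real.exp (-(c * t)) / t) - ∫ t in Set.Ioi δ, Real.exp (-t) / t := by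
    rw [← integral_sub Iec Ie1]
    refine setIntegral_congr_fun measurableSet_Ioi (fun t ht => ?_)
    rw [sub_div]
  conv_lhs => rw [hEiz]
  rw [hEi]
  have : ∑' k : ℕ, (GammaInc (↑k + 1) δ / Real.Gamma (↑k + 1)) * (z ^ (k + 1) / (↑k + 1)) =
      (∫ t in Set.Ioi δ, Real.exp (-(c * t)) / t) - ∫ t in Set.Ioi δ, Real.exp (-t) / t := by
    rw [tsum_congr ha, hswap, hclosed, hsplit]
  rw [this]
  ring
end
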